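/- Let W be a future-infinite causal worldline in M, let Σ be a slice with Σ ⊆ interior(D(Σ)), and set a = I⁻(W) ∩ Σ. Then (∂I⁻(a) \ a) ∩ interior(D(Σ)) ⊆ ∂I⁻(W), where ∂ denotes topological boundary. (The key geometric step in the proof of the paper's Lemma 'GSL implies entropy normal exteriors'.) -/

import Mathlib

open Set Metric

noncomputable section

/-- Spatial Euclidean factor. -/
abbrev E (n : ℕ) : Type := EuclideanSpace ℝ (Fin n)

/-- Minkowski spacetime `M = ℝ × E`. -/
abbrev M (n : ℕ) : Type := ℝ × E n

variable {n : ℕ}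

/-- Chronological relation `p ≪ q`. -/
def chron (p q : M n) : Prop := dist p.2 q.2 < q.1 - p.1

/-- Causal relation `p ≼ q`. -/
def causal (p q : M n) : Prop := dist p.2 q.2 ≤ q.1 - p.1

/-- Chronological future `I⁺(S)`. -/
def Iplus (S : Set (M n)) : Set (M n) := {q | ∃ p ∈ S, chron p q}

/-- Chronological past `I⁻(S)`. -/
def Iminus (S : Set (M n)) : Set (M n) := {q | ∃ p ∈ S, chron q p}

/-- `I(S) = I⁺(S) ∪ I⁻(S)`. -/
def Iboth (S : Set (M n)) : Set (M n) := Iplus S ∪ Iminus S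

/-- Causal future `J⁺(S)`. -/
def Jplus (S : Set (M n)) : Set (M n) := {q | ∃ p ∈ S, causal p q}

/-- Causal past `J⁻(S)`. -/
def Jminus (S : Set (M n)) : Set (M n) := {q | ∃ p ∈ S, causal q p}

/-- A set is achronal if no two of its points are chronologically related. -/
def Achronal (S : Set (M n)) : Prop := ∀ p ∈ S, ∀ q ∈ S, ¬ chron p q

/-- A set is acausal if no two distinct points of it are causally related. -/
def Acausal (S : Set (M n)) : Prop := ∀ p ∈ S, ∀ q ∈ S, p ≠ q → ¬ causal p q

/-- `edge(a)`: points `p ∈ closure a` such that every open neighborhood `O` of `p`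
contains `q, r` with `r ≪ p ≪ q` together with a continuous timelike curve in `O`
from `r` to `q` avoiding `a`. -/
def edge (a : Set (M n)) : Set (M n) :=
  {p | p ∈ closure a ∧ ∀ O : Set (M n), IsOpen O → p ∈ O →
    ∃ q ∈ O, ∃ r ∈ O, chron r p ∧ chron p q ∧
      ∃ γ : ℝ → M n, ContinuousOn γ (Icc 0 1) ∧ γ 0 = r ∧ γ 1 = q ∧
        (∀ s ∈ Icc (0:ℝ) 1, γ s ∈ O ∧ γ s ∉ a) ∧
        (∀ s ∈ Icc (0:ℝ) 1, ∀ t ∈ Icc (0:ℝ) 1, s < t → chron (γ s) (γ t))}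

/-- A slice: a closed achronal set with empty edge. -/
def IsSlice (Sg : Set (M n)) : Prop := IsClosed Sg ∧ Achronal Sg ∧ edge Sg = ∅

/-- A hypersurface in the slice `Sg`: a subset open in the subspace topology of `Sg`. -/
def IsHypersurfaceIn (Sg a : Set (M n)) : Prop :=
  a ⊆ Sg ∧ IsOpen ((Subtype.val : Sg → M n) ⁻¹' a)

/-- A hypersurface: subset of some slice, open in the slice's subspace topology. -/
def IsHypersurface (a : Set (M n)) : Prop := ∃ Sg, IsSlice Sg ∧ IsHypersurfaceIn Sg a

/-- The frontier (boundary) of `a` in the subspace topology of `Sg`,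
viewed as a subset of spacetime. -/
def frontierIn (Sg a : Set (M n)) : Set (M n) :=
  (Subtype.val : Sg → M n) '' frontier ((Subtype.val : Sg → M n) ⁻¹' a)

/-- A future-infinite causal worldline: the graph `{(t, x t) : t ≥ t₀}` of a
1-Lipschitz map defined on `[t₀, ∞)`. -/
def IsWorldline (W : Set (M n)) : Prop :=
  ∃ t₀ : ℝ, ∃ x : ℝ → E n, LipschitzOnWith 1 x (Ici t₀) ∧
    W = {p : M n | t₀ ≤ p.1 ∧ p.2 = x p.1}

/-- Domain of dependence `D(S)`: points through which every inextendible causal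
curve (graph of a 1-Lipschitz map `ℝ → E`) meets `S`. -/
def Dom (S : Set (M n)) : Set (M n) :=
  {p | ∀ x : ℝ → E n, LipschitzWith 1 x → x p.1 = p.2 → ∃ t : ℝ, (t, x t) ∈ S}

/-- Future domain of dependence `D⁺(S)`: every inextendible causal curve through `p`
meets `S` at some time `t ≤ p.1`. -/
def DomPlus (S : Set (M n)) : Set (M n) :=
  {p | ∀ x : ℝ → E n, LipschitzWith 1 x → x p.1 = p.2 →
    ∃ t : ℝ, t ≤ p.1 ∧ (t, x t) ∈ S}

/-- A `C¹` function has timelike gradient if at every point `∂T/∂t > ‖∇_E T‖`. -/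
def TimelikeGrad (T : M n → ℝ) : Prop :=
  ∀ p : M n,
    ‖(fderiv ℝ T p).comp (ContinuousLinearMap.inr ℝ ℝ (E n))‖ <
      fderiv ℝ T p ((1 : ℝ), (0 : E n))

/-- A past directed outward null deformation of the hypersurface `a` within the
open set `O`. -/
def IsPastOutwardNullDeformation (a O b : Set (M n)) : Prop :=
  IsHypersurface b ∧ Dom a ⊆ Dom b ∧ b ⊆ closure (Iminus a) ∧
  symmDiff a b ⊆ O ∧ edge b ⊆ edge a ∪ ((frontier (Iminus a) \ a) ∩ O)


/-- With `a = I⁻(W) ∩ Σ` and `Σ ⊆ interior(D(Σ))`,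
`(∂I⁻(a) \\ a) ∩ interior(D(Σ)) ⊆ ∂I⁻(W)`. -/
lemma chron_trans' {p q r : M n} (h1 : chron p q) (h2 : chron q r) : chron p r := by
  have := dist_triangle p.2 q.2 r.2
  unfold chron at *
  linarith

lemma chron_causal_trans' {p q r : M n} (h1 : chron p q) (h2 : causal q r) :
    chron p r := by
  have := dist_triangle p.2 q.2 r.2
  unfold chron causal at *
  linarith

lemma isOpen_chronFut (q : M n) : IsOpen {r : M n | chron q r} :=
  isOpen_lt (continuous_const.dist continuous_snd) (continuous_fst.sub continuous_const)

lemma isOpen_chronPast (q : M n) : IsOpen {r : M n | chron r q} :=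
  isOpen_lt (continuous_snd.dist continuous_const) (continuous_const.sub continuous_fst)

lemma isOpen_Iminus' (S : Set (M n)) : IsOpen (Iminus S) := by
  have h : Iminus S = ⋃ q ∈ S, {r : M n | chron r q} := by
    ext r; simp [Iminus]
  rw [h]
  exact isOpen_biUnion fun q _ => isOpen_chronPast q

lemma lipschitz_glue' {f : ℝ → E n} {T : ℝ}
    (h1 : LipschitzOnWith 1 f (Iic T)) (h2 : LipschitzOnWith 1 f (Ici T)) :
    LipschitzWith 1 f := by
  rw [lipschitzWith_iff_dist_le_mul]
  intro s t
  rw [NNReal.coe_one, one_mul]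
  rcases le_total s T with hs | hs <;> rcases le_total t T with ht | ht
  · simpa using h1.dist_le_mul s hs t ht
  · have d1 := h1.dist_le_mul s hs T (le_refl T)
    have d2 := h2.dist_le_mul T (le_refl T) t ht
    simp only [NNReal.coe_one, one_mul] at d1 d2
    have tri := dist_triangle (f s) (f T) (f t)
    rw [Real.dist_eq, abs_of_nonpos (show s - T ≤ 0 by linarith)] at d1
    rw [Real.dist_eq, abs_of_nonpos (show T - t ≤ 0 by linarith)] at d2
    rw [Real.dist_eq, abs_of_nonpos (show s - t ≤ 0 by linarith)]
    linarith
  · have d1 := h2.dist_le_mul s hs T (le_refl T)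
    have d2 := h1.dist_le_mul T (le_refl T) t ht
    simp only [NNReal.coe_one, one_mul] at d1 d2
    have tri := dist_triangle (f s) (f T) (f t)
    rw [Real.dist_eq, abs_of_nonneg (show 0 ≤ s - T by linarith)] at d1
    rw [Real.dist_eq, abs_of_nonneg (show 0 ≤ T - t by linarith)] at d2
    rw [Real.dist_eq, abs_of_nonneg (show 0 ≤ s - t by linarith)]
    linarith
  · simpa using h2.dist_le_mul s hs t ht

theorem stmt7 {n : ℕ} (hn : 0 < n) (W Sg : Set (M n))
    (hW : IsWorldline W) (hSg : IsSlice Sg)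
    (hD : Sg ⊆ interior (Dom Sg)) :
    (frontier (Iminus (Iminus W ∩ Sg)) \ (Iminus W ∩ Sg)) ∩ interior (Dom Sg)
      ⊆ frontier (Iminus W) := by
  obtain ⟨t₀, x, hx, hWeq⟩ := hW
  obtain ⟨hSgclosed, hSgach, -⟩ := hSg
  intro p hp
  obtain ⟨⟨hpfr, hpa⟩, hpD⟩ := hp
  set a : Set (M n) := Iminus W ∩ Sg with ha
  have hIaopen : IsOpen (Iminus a) := isOpen_Iminus' a
  have hIWopen : IsOpen (Iminus W) := isOpen_Iminus' W
  have hpcl : p ∈ closure (Iminus a) := frontier_subset_closure hpfr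
  have hpnotIa : p ∉ Iminus a := by
    intro h
    rw [hIaopen.frontier_eq] at hpfr
    exact hpfr.2 h
  have hsub : Iminus a ⊆ Iminus W := by
    rintro q ⟨a', ⟨⟨w', hw', hcw⟩, -⟩, hqa⟩
    exact ⟨w', hw', chron_trans' hqa hcw⟩
  have hclosW : p ∈ closure (Iminus W) := closure_mono hsub hpcl
  have hpnotIW : p ∉ Iminus W := by
    rintro ⟨w, hwW, hpw⟩
    -- w = (w.1, x w.1) with t₀ ≤ w.1, and dist p.2 w.2 < w.1 - p.1
    have hwW' : t₀ ≤ w.1 ∧ w.2 = x w.1 := by rw [hWeq] at hwW; exact hwW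
    have hpw' : dist p.2 (x w.1) < w.1 - p.1 := by
      rw [← hwW'.2]; exact hpw
    set s := w.1 with hs
    set δ : ℝ := s - p.1 - dist p.2 (x s) with hδ
    have hδpos : 0 < δ := by simp only [hδ]; linarith
    set ε : ℝ := δ / 2 with hε
    have hεpos : 0 < ε := by positivity
    set T : ℝ := max s (p.1 + 1) with hT
    have hTs : s ≤ T := le_max_left _ _
    have hT1 : p.1 + 1 ≤ T := le_max_right _ _
    have hB : (0:ℝ) < T - p.1 := by linarith
    set z : E n := x (T + ε) with hz
    have hTε : t₀ ≤ T + ε := by linarith [hwW'.1]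
    have hdz : dist p.2 z ≤ T - p.1 - ε := by
      have h1 : dist (x s) z ≤ T + ε - s := by
        have := hx.dist_le_mul s hwW'.1 (T + ε) hTε
        rw [NNReal.coe_one, one_mul, Real.dist_eq,
          abs_of_nonpos (show s - (T + ε) ≤ 0 by linarith)] at this
        linarith
      calc dist p.2 z ≤ dist p.2 (x s) + dist (x s) z := dist_triangle _ _ _
        _ ≤ (s - p.1 - δ) + (T + ε - s) := by
            have : dist p.2 (x s) = s - p.1 - δ := by simp only [hδ]; ring
            linarith
        _ = T - p.1 - ε := by simp only [hε]; ring
    have hdz' : dist p.2 z < T - p.1 := by linarith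
    set y : ℝ → E n := fun t => if t ≤ T then p.2 + ((t - p.1) / (T - p.1)) • (z - p.2)
      else x (t + ε) with hy
    have hy_le : ∀ t' ≤ T, y t' = p.2 + ((t' - p.1) / (T - p.1)) • (z - p.2) := by
      intro t' ht'; simp only [hy, if_pos ht']
    have hy_gt : ∀ t', T < t' → y t' = x (t' + ε) := by
      intro t' ht'; simp only [hy, if_neg (not_le.mpr ht')]
    have hyp1 : y p.1 = p.2 := by
      rw [hy_le p.1 (by linarith)]; simp
    have hyT : y T = z := by
      rw [hy_le T le_rfl, div_self (ne_of_gt hB), one_smul]; abel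
    -- distance identities
    have hdist1 : ∀ t' ≤ T, dist (y t') p.2 = |t' - p.1| / (T - p.1) * dist p.2 z := by
      intro t' ht'
      rw [hy_le t' ht', dist_eq_norm, add_sub_cancel_left, norm_smul, Real.norm_eq_abs,
        abs_div, abs_of_pos hB, dist_comm, dist_eq_norm]
    have hdist2 : ∀ t' ≤ T, dist (y t') z = |t' - T| / (T - p.1) * dist p.2 z := by
      intro t' ht'
      have hsub2 : y t' - z = ((t' - p.1) / (T - p.1) - 1) • (z - p.2) := by
        rw [hy_le t' ht', sub_smul, one_smul]; abel
      have hq : (t' - p.1) / (T - p.1) - 1 = (t' - T) / (T - p.1) := by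
        field_simp
        ring
      rw [dist_eq_norm, hsub2, hq, norm_smul, Real.norm_eq_abs, abs_div,
        abs_of_pos hB, dist_comm, dist_eq_norm]
    have hratio : dist p.2 z / (T - p.1) < 1 := (div_lt_one hB).mpr hdz'
    have hratio0 : 0 ≤ dist p.2 z / (T - p.1) := by positivity
    -- Lipschitz
    have hlip1 : LipschitzOnWith 1 y (Iic T) := by
      rw [lipschitzOnWith_iff_dist_le_mul]
      intro s' hs' t' ht'
      rw [NNReal.coe_one, one_mul]
      have e1 : y s' - y t' = ((s' - t') / (T - p.1)) • (z - p.2) := by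
        rw [hy_le s' hs', hy_le t' ht']
        module
      rw [dist_eq_norm, e1, norm_smul, Real.norm_eq_abs, abs_div, abs_of_pos hB,
        Real.dist_eq]
      rw [div_mul_eq_mul_div, mul_comm, ← div_mul_eq_mul_div]
      have : ‖z - p.2‖ / (T - p.1) ≤ 1 := by
        rw [div_le_one hB, ← dist_eq_norm, dist_comm]
        linarith
      calc ‖z - p.2‖ / (T - p.1) * |s' - t'| ≤ 1 * |s' - t'| := by
            apply mul_le_mul_of_nonneg_right this (abs_nonneg _)
        _ = |s' - t'| := one_mul _
    have hlip2 : LipschitzOnWith 1 y (Ici T) := by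
      rw [lipschitzOnWith_iff_dist_le_mul]
      intro s' hs' t' ht'
      rw [NNReal.coe_one, one_mul]
      have hyval : ∀ u ∈ Ici T, y u = x (u + ε) := by
        intro u hu
        rcases eq_or_lt_of_le (mem_Ici.mp hu) with h | h
        · rw [← h, hyT, hz]
        · exact hy_gt u h
      rw [hyval s' hs', hyval t' ht']
      have := hx.dist_le_mul (s' + ε)
        (show t₀ ≤ s' + ε by linarith [mem_Ici.mp hs', hwW'.1])
        (t' + ε) (show t₀ ≤ t' + ε by linarith [mem_Ici.mp ht', hwW'.1])
      rw [NNReal.coe_one, one_mul] at this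
      calc dist (x (s' + ε)) (x (t' + ε)) ≤ dist (s' + ε) (t' + ε) := this
        _ = dist s' t' := by rw [Real.dist_eq, Real.dist_eq]; congr 1; ring
    have hylip : LipschitzWith 1 y := lipschitz_glue' hlip1 hlip2
    -- the curve meets Sg
    obtain ⟨t, htSg⟩ := (interior_subset hpD) y hylip hyp1
    rcases lt_trichotomy t p.1 with hlt | heq | hgt
    · -- q ≪ p with q ∈ Sg : contradicts achronality via closure point
      have hq : chron (t, y t) p := by
        show dist (y t) p.2 < p.1 - t
        rw [hdist1 t (by linarith), abs_of_nonpos (by linarith : t - p.1 ≤ 0),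
          div_mul_eq_mul_div, mul_div_assoc]
        calc -(t - p.1) * (dist p.2 z / (T - p.1)) < -(t - p.1) * 1 :=
              mul_lt_mul_of_pos_left hratio (by linarith)
          _ = p.1 - t := by ring
      obtain ⟨r, hr1, hr2⟩ := mem_closure_iff.mp hpcl _ (isOpen_chronFut (t, y t)) hq
      obtain ⟨a', ha', hra'⟩ := hr2
      exact hSgach (t, y t) htSg a' ha'.2 (chron_trans' hr1 hra')
    · -- p ∈ Sg, so p ∈ a
      subst heq
      rw [hyp1] at htSg
      exact hpa ⟨⟨w, hwW, hpw⟩, htSg⟩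
    · -- p ≪ q and q ∈ I⁻(W), so p ∈ I⁻(a)
      have hchron : chron p (t, y t) := by
        rcases le_or_gt t T with hle | hgt2
        · show dist p.2 (y t) < t - p.1
          rw [dist_comm, hdist1 t hle, abs_of_nonneg (by linarith : (0:ℝ) ≤ t - p.1),
            div_mul_eq_mul_div, mul_div_assoc]
          calc (t - p.1) * (dist p.2 z / (T - p.1)) < (t - p.1) * 1 :=
                mul_lt_mul_of_pos_left hratio (by linarith)
            _ = t - p.1 := by ring
        · have h1 : chron p (T, y T) := by
            show dist p.2 (y T) < T - p.1
            rw [hyT]; exact hdz'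
          have h2 : causal (T, y T) (t, y t) := by
            show dist (y T) (y t) ≤ t - T
            rw [hyT, hy_gt t hgt2]
            have := hx.dist_le_mul (T + ε) hTε (t + ε)
              (show t₀ ≤ t + ε by linarith)
            rw [NNReal.coe_one, one_mul, Real.dist_eq,
              abs_of_nonpos (show T + ε - (t + ε) ≤ 0 by linarith)] at this
            simp only [hz]
            linarith
          exact chron_causal_trans' h1 h2
      have hIW : (t, y t) ∈ Iminus W := by
        rcases le_or_gt t T with hle | hgt2
        · refine ⟨(T + ε, z), ?_, ?_⟩
          · rw [hWeq]; exact ⟨hTε, rfl⟩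
          · show dist (y t) z < T + ε - t
            rw [hdist2 t hle, abs_of_nonpos (by linarith : t - T ≤ 0),
              div_mul_eq_mul_div, mul_div_assoc]
            have h1 : -(t - T) * (dist p.2 z / (T - p.1)) ≤ -(t - T) * 1 :=
              mul_le_mul_of_nonneg_left (le_of_lt hratio) (by linarith)
            have h2 : -(t - T) * 1 = T - t := by ring
            linarith
        · refine ⟨(t + ε, x (t + ε)), ?_, ?_⟩
          · rw [hWeq]; exact ⟨show t₀ ≤ t + ε by linarith, rfl⟩
          · show dist (y t) (x (t + ε)) < t + ε - t
            rw [hy_gt t hgt2, dist_self]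
            linarith
      exact hpnotIa ⟨(t, y t), ⟨hIW, htSg⟩, hchron⟩
  rw [hIWopen.frontier_eq]
  exact ⟨hclosW, hpnotIW⟩

end
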